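/- Assume moreover ξ₁ > 0 and set z = τ²/ξ₁². Then −i·det A_ee = ξ₁⁵·[z²ρ_s√(1 − z/c_p²) + ρ_f⁻¹√(1 − z/c_f²)·((2μ_s − ρ_s z)² − 4μ_s²√(1 − z/c_s²)·√(1 − z/c_p²))]. In particular, det A_ee = 0 if and only if z satisfies the secular equation for Scholte waves z²ρ_s√(1 − z/c_p²) + ρ_f⁻¹√(1 − z/c_f²)·((2μ_s − ρ_s z)² − 4μ_s²√(1 − z/c_s²)·√(1 − z/c_p²)) = 0. -/

import Mathlib

/-- Factoring the elliptic-elliptic determinant through the secular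
equation for Scholte waves, with z = τ²/ξ₁². -/
theorem det_elliptic_elliptic_secular
    (lams mus rhos lamf rhof : ℝ)
    (hlams : 0 < lams) (hmus : 0 < mus) (hrhos : 0 < rhos)
    (hlamf : 0 < lamf) (hrhof : 0 < rhof)
    (cs cp cf : ℝ)
    (hcs : cs = Real.sqrt (mus / rhos))
    (hcp : cp = Real.sqrt ((lams + 2 * mus) / rhos))
    (hcf : cf = Real.sqrt (lamf / rhof))
    (ξ1 τ : ℝ)
    (hes : τ ^ 2 < cs ^ 2 * ξ1 ^ 2) (hef : τ ^ 2 < cf ^ 2 * ξ1 ^ 2)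
    (hξ1 : ξ1 ≠ 0)
    (tξ3s tξ3p tξ3f : ℂ)
    (htξ3s : tξ3s = Complex.I * Real.sqrt (ξ1 ^ 2 - τ ^ 2 / cs ^ 2))
    (htξ3p : tξ3p = Complex.I * Real.sqrt (ξ1 ^ 2 - τ ^ 2 / cp ^ 2))
    (htξ3f : tξ3f = Complex.I * Real.sqrt (ξ1 ^ 2 - τ ^ 2 / cf ^ 2))
    (A : Matrix (Fin 3) (Fin 3) ℂ)
    (hA : A = (!![τ * ξ1, τ * tξ3p, -(rhof⁻¹ * tξ3f);
                 2 * mus * ξ1 ^ 2 - rhos * τ ^ 2, 2 * mus * ξ1 * tξ3p, 0;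
                 2 * mus * ξ1 * tξ3s, -(2 * mus * ξ1 ^ 2) + rhos * τ ^ 2, τ]
        : Matrix (Fin 3) (Fin 3) ℂ))
    (hξ1pos : 0 < ξ1)
    (z : ℝ) (hz : z = τ ^ 2 / ξ1 ^ 2) :
    -Complex.I * A.det = ((ξ1 ^ 5 : ℝ) : ℂ) *
        ((z ^ 2 * rhos * Real.sqrt (1 - z / cp ^ 2)
          + rhof⁻¹ * Real.sqrt (1 - z / cf ^ 2)
            * ((2 * mus - rhos * z) ^ 2
              - 4 * mus ^ 2 * Real.sqrt (1 - z / cs ^ 2)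
                  * Real.sqrt (1 - z / cp ^ 2)) : ℝ) : ℂ)
      ∧ (A.det = 0 ↔
          z ^ 2 * rhos * Real.sqrt (1 - z / cp ^ 2)
            + rhof⁻¹ * Real.sqrt (1 - z / cf ^ 2)
              * ((2 * mus - rhos * z) ^ 2
                - 4 * mus ^ 2 * Real.sqrt (1 - z / cs ^ 2)
                    * Real.sqrt (1 - z / cp ^ 2)) = 0) := by
  have hcs0 : (0:ℝ) < cs := by rw [hcs]; exact Real.sqrt_pos.mpr (div_pos hmus hrhos)
  have hcp0 : (0:ℝ) < cp := by
    rw [hcp]; exact Real.sqrt_pos.mpr (div_pos (by linarith) hrhos)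
  have hcf0 : (0:ℝ) < cf := by rw [hcf]; exact Real.sqrt_pos.mpr (div_pos hlamf hrhof)
  have key : ∀ c : ℝ, 0 < c → Real.sqrt (ξ1 ^ 2 - τ ^ 2 / c ^ 2)
      = ξ1 * Real.sqrt (1 - z / c ^ 2) := by
    intro c hc
    have h1 : ξ1 ^ 2 - τ ^ 2 / c ^ 2 = ξ1 ^ 2 * (1 - z / c ^ 2) := by
      rw [hz]; field_simp
    rw [h1, Real.sqrt_mul (sq_nonneg ξ1), Real.sqrt_sq hξ1pos.le]
  have hτ2 : (τ:ℂ) ^ 2 = (z:ℂ) * (ξ1:ℂ) ^ 2 := by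
    have : τ ^ 2 = z * ξ1 ^ 2 := by rw [hz]; field_simp
    exact_mod_cast congrArg (Complex.ofReal ·) this
  set S : ℂ := ((Real.sqrt (1 - z / cs ^ 2) : ℝ) : ℂ) with hS
  set P : ℂ := ((Real.sqrt (1 - z / cp ^ 2) : ℝ) : ℂ) with hP
  set F : ℂ := ((Real.sqrt (1 - z / cf ^ 2) : ℝ) : ℂ) with hF
  have hdet : A.det = Complex.I * (ξ1:ℂ) ^ 5 *
      ((z:ℂ) ^ 2 * rhos * P + (rhof:ℂ)⁻¹ * F *
        ((2 * mus - rhos * z) ^ 2 - 4 * mus ^ 2 * S * P)) := by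
    subst hA
    simp only [Matrix.det_fin_three, Matrix.of_apply, Matrix.cons_val', Matrix.cons_val_zero, Matrix.cons_val_one,
      Matrix.head_cons, Matrix.empty_val', Matrix.cons_val_fin_one, Matrix.head_fin_const,
      Matrix.cons_val_two, Matrix.tail_cons]
    rw [htξ3s, htξ3p, htξ3f, key cs hcs0, key cp hcp0, key cf hcf0]
    push_cast [← hS, ← hP, ← hF]
    set J := Complex.I with hJ
    have hI2 : J ^ 2 = -1 := Complex.I_sq
    set t := (τ:ℂ); set x := (ξ1:ℂ); set m := (mus:ℂ); set r := (rhos:ℂ)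
    set q := (rhof:ℂ)⁻¹; set zc := (z:ℂ)
    linear_combination
      (4*x^5*m^2*q*F*P*S*J) * hI2
      + (t^2*x*r*P*J - 4*x^3*m*r*q*F*J + t^2*x*r^2*q*F*J
         + x^3*r*P*zc*J + x^3*r^2*q*F*zc*J) * hτ2
  have hE : -Complex.I * A.det = ((ξ1 ^ 5 : ℝ) : ℂ) *
        ((z ^ 2 * rhos * Real.sqrt (1 - z / cp ^ 2)
          + rhof⁻¹ * Real.sqrt (1 - z / cf ^ 2)
            * ((2 * mus - rhos * z) ^ 2
              - 4 * mus ^ 2 * Real.sqrt (1 - z / cs ^ 2)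
                  * Real.sqrt (1 - z / cp ^ 2)) : ℝ) : ℂ) := by
    rw [hdet]
    push_cast [← hS, ← hP, ← hF]
    linear_combination (-(ξ1:ℂ)^5 *
      ((z:ℂ) ^ 2 * rhos * P + (rhof:ℂ)⁻¹ * F *
        ((2 * mus - rhos * z) ^ 2 - 4 * mus ^ 2 * S * P))) * Complex.I_sq
  refine ⟨hE, ?_⟩
  constructor
  · intro h
    have h2 : ((ξ1 ^ 5 : ℝ) : ℂ) * ((z ^ 2 * rhos * Real.sqrt (1 - z / cp ^ 2)
          + rhof⁻¹ * Real.sqrt (1 - z / cf ^ 2)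
            * ((2 * mus - rhos * z) ^ 2
              - 4 * mus ^ 2 * Real.sqrt (1 - z / cs ^ 2)
                  * Real.sqrt (1 - z / cp ^ 2)) : ℝ) : ℂ) = 0 := by
      rw [← hE, h, mul_zero]
    have hx5 : ((ξ1 ^ 5 : ℝ) : ℂ) ≠ 0 := by
      exact_mod_cast pow_ne_zero 5 hξ1
    have := (mul_eq_zero.mp h2).resolve_left hx5
    exact_mod_cast this
  · intro h
    have h0 : -Complex.I * A.det = 0 := by rw [hE, h]; simp
    have := mul_eq_zero.mp h0
    rcases this with h1 | h1
    · exact absurd h1 (by simp [Complex.I_ne_zero])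
    · exact h1
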